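/- Let d ∈ (0,1), let n be a positive even integer, let m ≥ 1 be an integer with n ≥ m − 1, and let s > 0. Then the WENO-AIM mapping function g_AIM is monotonically nondecreasing on the interval [0,1]. -/

import Mathlib

/-- Let `d ∈ (0,1)`, `n` a positive even integer, `m ≥ 1` an
integer with `n ≥ m − 1`, and `s > 0`.  Then the WENO-AIM mapping function
`g_AIM(ω) = d + (ω − d)^{n+1}/((ω − d)ⁿ + s(ω(1 − ω))^m)` is monotonically
nondecreasing on the interval `[0,1]`. -/
theorem stmt15 (d : ℝ) (hd : d ∈ Set.Ioo (0 : ℝ) 1) (n m : ℕ)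
    (hn : 0 < n) (hne : Even n) (hm : 1 ≤ m) (hmn : m ≤ n + 1)
    (s : ℝ) (hs : 0 < s)
    (gAIM : ℝ → ℝ)
    (hgAIM : ∀ ω : ℝ, gAIM ω =
      d + (ω - d) ^ (n + 1) / ((ω - d) ^ n + s * (ω * (1 - ω)) ^ m)) :
    MonotoneOn gAIM (Set.Icc (0 : ℝ) 1) := by
  obtain ⟨hd0, hd1⟩ := hd
  have hfun : gAIM = fun ω : ℝ =>
      d + (ω - d) ^ (n + 1) / ((ω - d) ^ n + s * (ω * (1 - ω)) ^ m) :=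
    funext hgAIM
  subst hfun
  obtain ⟨l, rfl⟩ : ∃ l, n = l + 1 := ⟨n - 1, by omega⟩
  obtain ⟨k, rfl⟩ : ∃ k, m = k + 1 := ⟨m - 1, by omega⟩
  set G : ℝ → ℝ := fun ω => (ω - d) ^ (l + 1) + s * (ω * (1 - ω)) ^ (k + 1)
    with hGdef
  have hG : ∀ ω ∈ Set.Icc (0 : ℝ) 1, 0 < G ω := by
    intro ω hω
    obtain ⟨h0, h1⟩ := hω
    rcases eq_or_ne ω d with rfl | hne'
    · have : G ω = s * (ω * (1 - ω)) ^ (k + 1) := by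
        simp [hGdef, zero_pow]
      rw [this]
      have : 0 < ω * (1 - ω) := mul_pos hd0 (by linarith)
      positivity
    · have h1' : 0 < (ω - d) ^ (l + 1) := hne.pow_pos (sub_ne_zero.mpr hne')
      have h2' : 0 ≤ s * (ω * (1 - ω)) ^ (k + 1) := by
        have : 0 ≤ ω * (1 - ω) := mul_nonneg h0 (by linarith)
        positivity
      simp only [hGdef]
      linarith
  -- derivative data
  have hderiv : ∀ ω ∈ Set.Icc (0 : ℝ) 1,
      HasDerivAt (fun x : ℝ =>
          d + (x - d) ^ (l + 1 + 1) / ((x - d) ^ (l + 1) + s * (x * (1 - x)) ^ (k + 1)))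
        ((((l : ℝ) + 2) * (ω - d) ^ (l + 1) * G ω -
            (ω - d) ^ (l + 2) *
              (((l : ℝ) + 1) * (ω - d) ^ l +
                s * (((k : ℝ) + 1) * (ω * (1 - ω)) ^ k * (1 - 2 * ω)))) / (G ω) ^ 2)
        ω := by
    intro ω hω
    have hGne : G ω ≠ 0 := ne_of_gt (hG ω hω)
    have hid : HasDerivAt (fun x : ℝ => x - d) 1 ω := (hasDerivAt_id ω).sub_const d
    have hF : HasDerivAt (fun x : ℝ => (x - d) ^ (l + 1 + 1))
        (((l : ℝ) + 2) * (ω - d) ^ (l + 1)) ω := by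
      have := hid.fun_pow (l + 1 + 1)
      simpa [mul_comm, mul_assoc] using this.congr_deriv (by push_cast; ring)
    have hu : HasDerivAt (fun x : ℝ => x * (1 - x)) (1 - 2 * ω) ω := by
      have := (hasDerivAt_id ω).fun_mul ((hasDerivAt_const ω (1 : ℝ)).fun_sub (hasDerivAt_id ω))
      simpa using this.congr_deriv (by simp only [id_eq]; ring)
    have hum : HasDerivAt (fun x : ℝ => (x * (1 - x)) ^ (k + 1))
        (((k : ℝ) + 1) * (ω * (1 - ω)) ^ k * (1 - 2 * ω)) ω := by
      have := hu.fun_pow (k + 1)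
      simpa using this.congr_deriv (by push_cast; ring)
    have hFn : HasDerivAt (fun x : ℝ => (x - d) ^ (l + 1))
        (((l : ℝ) + 1) * (ω - d) ^ l) ω := by
      have := hid.fun_pow (l + 1)
      simpa using this.congr_deriv (by push_cast; ring)
    have hGder : HasDerivAt G
        (((l : ℝ) + 1) * (ω - d) ^ l +
          s * (((k : ℝ) + 1) * (ω * (1 - ω)) ^ k * (1 - 2 * ω))) ω :=
      hFn.fun_add ((hum.const_mul s))
    have hq := hF.fun_div hGder hGne
    have := (hasDerivAt_const ω d).fun_add hq
    simpa [hGdef, zero_add, pow_succ] using this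
  -- the derivative is nonneg on the interior
  apply monotoneOn_of_deriv_nonneg (convex_Icc 0 1)
  · -- continuity
    apply ContinuousOn.add continuousOn_const
    apply ContinuousOn.div
    · fun_prop
    · fun_prop
    · intro ω hω; exact ne_of_gt (hG ω hω)
  · intro ω hω
    rw [interior_Icc] at hω
    exact ((hderiv ω (Set.mem_Icc_of_Ioo hω)).differentiableAt).differentiableWithinAt
  · intro ω hω
    rw [interior_Icc] at hω
    obtain ⟨h0, h1⟩ := hω
    rw [(hderiv ω ⟨le_of_lt h0, le_of_lt h1⟩).deriv]
    apply div_nonneg _ (sq_nonneg _)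
    have hnum : ((l : ℝ) + 2) * (ω - d) ^ (l + 1) * G ω -
        (ω - d) ^ (l + 2) *
          (((l : ℝ) + 1) * (ω - d) ^ l +
            s * (((k : ℝ) + 1) * (ω * (1 - ω)) ^ k * (1 - 2 * ω))) =
        ((ω - d) ^ (l + 1)) ^ 2 +
          s * (ω - d) ^ (l + 1) * (ω * (1 - ω)) ^ k *
            (((l : ℝ) + 2) * (ω * (1 - ω)) - ((k : ℝ) + 1) * (ω - d) * (1 - 2 * ω)) := by
      simp only [hGdef]
      ring
    rw [hnum]
    have hp : 0 ≤ (ω - d) ^ (l + 1) := hne.pow_nonneg _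
    have huk : 0 ≤ (ω * (1 - ω)) ^ k := by
      have : 0 ≤ ω * (1 - ω) := mul_nonneg (le_of_lt h0) (by linarith)
      positivity
    have hB : 0 ≤ ((l : ℝ) + 2) * (ω * (1 - ω)) - ((k : ℝ) + 1) * (ω - d) * (1 - 2 * ω) := by
      have hupq : (ω - d) * (1 - 2 * ω) ≤ ω * (1 - ω) := by nlinarith [sq_nonneg (ω - d)]
      have hu0 : 0 ≤ ω * (1 - ω) := mul_nonneg (le_of_lt h0) (by linarith)
      have hkl : (k : ℝ) + 1 ≤ (l : ℝ) + 2 := by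
        have : (k : ℝ) ≤ (l : ℝ) + 1 := by exact_mod_cast Nat.lt_succ_iff.mp (by omega)
        linarith
      nlinarith [mul_nonneg (by positivity : (0:ℝ) ≤ (k : ℝ) + 1)
          (sub_nonneg.mpr hupq),
        mul_nonneg (sub_nonneg.mpr hkl) hu0]
    have := mul_nonneg (mul_nonneg (mul_nonneg hs.le hp) huk) hB
    nlinarith [sq_nonneg ((ω - d) ^ (l + 1))]
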